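/- Let 0 < R ≤ ∞ and let φ be a quasiconcave function on [0,R). Then there exists a constant C > 0 such that sup_{0<t<R} φ(t) f**(t) ≤ C · sup_{0<t<R} φ(t) f(t) for every nonnegative nonincreasing measurable function f on (0,R) if and only if φ satisfies the B-condition. (The reverse inequality sup_{0<t<R} φ(t) f(t) ≤ sup_{0<t<R} φ(t) f**(t) holds always, since f ≤ f** for nonincreasing f.) -/

import Mathlib

open MeasureTheory Set ENNReal Filter

noncomputable section

/-- The open interval `(0, R)` inside `ℝ`, where `R ∈ (0, ∞]` is an extended real. -/
def DomIoo (R : ℝ≥0∞) : Set ℝ := {t : ℝ | 0 < t ∧ ENNReal.ofReal t < R}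

/-- The part of `(0, R)` lying strictly above `t`. -/
def DomAbove (R : ℝ≥0∞) (t : ℝ) : Set ℝ := {s : ℝ | t < s ∧ ENNReal.ofReal s < R}

/-- `φ : [0, R) → [0, ∞)` is quasiconcave: it vanishes exactly at `0`, is nondecreasing,
and `t ↦ φ(t)/t` is nonincreasing on `(0, R)`.  (Values on `(0, R)` are finite.) -/
def QuasiConcaveOn (R : ℝ≥0∞) (φ : ℝ → ℝ≥0∞) : Prop :=
  φ 0 = 0 ∧
  (∀ t ∈ DomIoo R, 0 < φ t ∧ φ t < ⊤) ∧
  (∀ s t : ℝ, 0 ≤ s → s ≤ t → t ∈ DomIoo R → φ s ≤ φ t) ∧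
  (∀ s t : ℝ, s ∈ DomIoo R → s ≤ t → t ∈ DomIoo R →
    φ t / ENNReal.ofReal t ≤ φ s / ENNReal.ofReal s)

/-- `f` is a nonnegative nonincreasing measurable function on `(0, R)`
(nonnegativity is built into the codomain `[0, ∞]`). -/
def NonincOn (R : ℝ≥0∞) (f : ℝ → ℝ≥0∞) : Prop :=
  Measurable f ∧ ∀ s t : ℝ, s ∈ DomIoo R → s ≤ t → t ∈ DomIoo R → f t ≤ f s

/-- The level function `f**(t) = (1/t) ∫₀ᵗ f(s) ds`. -/
def dstar (f : ℝ → ℝ≥0∞) (t : ℝ) : ℝ≥0∞ :=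
  (∫⁻ s in Ioo (0 : ℝ) t, f s) / ENNReal.ofReal t

/-- The supremum operator `S_φ f(t) = (1/φ(t)) ⋅ sup_{0<s<t} φ(s) f(s)`. -/
def Ssup (φ f : ℝ → ℝ≥0∞) (t : ℝ) : ℝ≥0∞ :=
  (⨆ s ∈ Ioo (0 : ℝ) t, φ s * f s) / φ t

/-- The supremum operator `T_ψ f(t) = (1/ψ(t)) ⋅ sup_{t<s<R} ψ(s) f(s)`. -/
def Tsup (R : ℝ≥0∞) (ψ f : ℝ → ℝ≥0∞) (t : ℝ) : ℝ≥0∞ :=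
  (⨆ s ∈ DomAbove R t, ψ s * f s) / ψ t

/-- The `B`-condition: `∫₀ᵗ ds/φ(s) ≤ C ⋅ t/φ(t)` on `(0, R)` for some constant `C > 0`. -/
def BCond (R : ℝ≥0∞) (φ : ℝ → ℝ≥0∞) : Prop :=
  ∃ C : ℝ, 0 < C ∧ ∀ t ∈ DomIoo R,
    (∫⁻ s in Ioo (0 : ℝ) t, 1 / φ s) ≤ ENNReal.ofReal C * (ENNReal.ofReal t / φ t)

/-- A weight on `(0, R)`: positive, measurable and locally integrable
(with finite integral near the origin). -/
def IsWeight (R : ℝ≥0∞) (w : ℝ → ℝ≥0∞) : Prop :=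
  Measurable w ∧ (∀ t ∈ DomIoo R, 0 < w t ∧ w t < ⊤) ∧
  ∀ t ∈ DomIoo R, (∫⁻ s in Ioo (0 : ℝ) t, w s) < ⊤

/-- Nontriviality of a weight `w` for the exponent `p`:
`∫₁^∞ s^{-p} w(s) ds < ∞` when `R = ∞`, and `∫₀ᴿ s^{-p} w(s) ds = ∞` when `R < ∞`. -/
def Nontriv (R : ℝ≥0∞) (p : ℝ) (w : ℝ → ℝ≥0∞) : Prop :=
  (R = ⊤ → (∫⁻ s in Ioi (1 : ℝ), ENNReal.ofReal s ^ (-p) * w s) < ⊤) ∧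
  (R ≠ ⊤ → (∫⁻ s in DomIoo R, ENNReal.ofReal s ^ (-p) * w s) = ⊤)

/-- `sup φ f** ≲ sup φ f` for all nonneg. nonincreasing `f` iff `φ ∈ B`; the reverse
inequality `sup φ f ≤ sup φ f**` always holds. -/
-- auxiliary
lemma dom_of_mem_Ioo {R : ℝ≥0∞} {t s : ℝ} (ht : t ∈ DomIoo R) (hs : s ∈ Ioo (0:ℝ) t) :
    s ∈ DomIoo R :=
  ⟨hs.1, lt_of_le_of_lt (ENNReal.ofReal_le_ofReal hs.2.le) ht.2⟩

theorem statement1 (R : ℝ≥0∞) (hR : 0 < R) (φ : ℝ → ℝ≥0∞)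
    (hφ : QuasiConcaveOn R φ) :
    ((∃ C : ℝ, 0 < C ∧ ∀ f : ℝ → ℝ≥0∞, NonincOn R f →
        (⨆ t ∈ DomIoo R, φ t * dstar f t) ≤
          ENNReal.ofReal C * ⨆ t ∈ DomIoo R, φ t * f t) ↔
      BCond R φ) ∧
    (∀ f : ℝ → ℝ≥0∞, NonincOn R f →
      (⨆ t ∈ DomIoo R, φ t * f t) ≤ ⨆ t ∈ DomIoo R, φ t * dstar f t) := by
  obtain ⟨hφ0, hφfin, hφmono, hφdiv⟩ := hφ
  constructor
  · constructor
    · rintro ⟨C, hC, hbound⟩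
      refine ⟨C, hC, fun t ht => ?_⟩
      have ht0 : (0:ℝ) < t := ht.1
      have hoft0 : ENNReal.ofReal t ≠ 0 := by
        simpa [ENNReal.ofReal_eq_zero, not_le] using ht0
      have hofttop : ENNReal.ofReal t ≠ ⊤ := ENNReal.ofReal_ne_top
      -- test function
      set Φ : ℝ → ℝ≥0∞ := fun s => φ (max 0 (min s t)) with hΦdef
      have hΦmono : Monotone Φ := by
        intro a b hab
        have h1 : max 0 (min a t) ≤ max 0 (min b t) := by
          apply max_le_max le_rfl (min_le_min hab le_rfl)
        rcases lt_or_eq_of_le (le_max_left 0 (min b t)) with hb | hb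
        · exact hφmono _ _ (le_max_left _ _) h1
            ⟨hb, lt_of_le_of_lt (ENNReal.ofReal_le_ofReal
              (max_le ht0.le (min_le_right b t))) ht.2⟩
        · have h2 : max 0 (min a t) = 0 := le_antisymm (h1.trans hb.ge) (le_max_left _ _)
          show φ (max 0 (min a t)) ≤ φ (max 0 (min b t))
          rw [h2, ← hb]
      set f : ℝ → ℝ≥0∞ := (Ioo (0:ℝ) t).indicator (fun s => (Φ s)⁻¹) with hfdef
      have hfeq : ∀ s ∈ Ioo (0:ℝ) t, f s = (φ s)⁻¹ := by
        intro s hs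
        rw [hfdef, indicator_of_mem hs, hΦdef]
        simp [min_eq_left hs.2.le, max_eq_right hs.1.le]
      have hf : NonincOn R f := by
        constructor
        · exact ((hΦmono.measurable).inv).indicator measurableSet_Ioo
        · intro a b ha hab hb
          by_cases hbt : b < t
          · rw [hfdef, indicator_of_mem (show b ∈ Ioo (0:ℝ) t from ⟨hb.1, hbt⟩),
              indicator_of_mem (show a ∈ Ioo (0:ℝ) t from ⟨ha.1, lt_of_le_of_lt hab hbt⟩)]
            exact ENNReal.inv_le_inv.2 (hΦmono hab)
          · rw [hfdef, indicator_of_notMem (fun h => hbt h.2)]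
            exact zero_le
      have hsup1 : (⨆ u ∈ DomIoo R, φ u * f u) ≤ 1 := by
        refine iSup₂_le fun u hu => ?_
        by_cases hut : u ∈ Ioo (0:ℝ) t
        · rw [hfeq u hut, ENNReal.mul_inv_cancel (hφfin u hu).1.ne'
            (hφfin u hu).2.ne]
        · rw [hfdef, indicator_of_notMem hut, mul_zero]; exact zero_le
      have key := hbound f hf
      have h1 : φ t * dstar f t ≤ ENNReal.ofReal C := by
        calc φ t * dstar f t ≤ ⨆ u ∈ DomIoo R, φ u * dstar f u :=
              le_iSup₂_of_le t ht le_rfl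
          _ ≤ ENNReal.ofReal C * ⨆ u ∈ DomIoo R, φ u * f u := key
          _ ≤ ENNReal.ofReal C * 1 := mul_le_mul_right hsup1 _
          _ = ENNReal.ofReal C := mul_one _
      have hint : dstar f t = (∫⁻ s in Ioo (0:ℝ) t, 1 / φ s) / ENNReal.ofReal t := by
        rw [dstar]
        congr 1
        refine setLIntegral_congr_fun measurableSet_Ioo (fun s hs => ?_)
        rw [hfeq s hs, one_div]
      rw [hint] at h1
      set I := ∫⁻ s in Ioo (0:ℝ) t, 1 / φ s with hI
      have h2 : I / ENNReal.ofReal t ≤ ENNReal.ofReal C / φ t := by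
        rw [ENNReal.le_div_iff_mul_le (Or.inl (hφfin t ht).1.ne')
          (Or.inl (hφfin t ht).2.ne), mul_comm]
        exact h1
      have h3 : I ≤ ENNReal.ofReal C / φ t * ENNReal.ofReal t :=
        (ENNReal.div_le_iff hoft0 hofttop).1 h2
      calc I ≤ ENNReal.ofReal C / φ t * ENNReal.ofReal t := h3
        _ = ENNReal.ofReal C * (ENNReal.ofReal t / φ t) := by
            rw [div_eq_mul_inv, div_eq_mul_inv]; ring
    · rintro ⟨C, hC, hB⟩
      refine ⟨C, hC, fun f hf => ?_⟩
      set M := ⨆ u ∈ DomIoo R, φ u * f u with hM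
      by_cases hMtop : M = ⊤
      · rw [hMtop, ENNReal.mul_top (by simpa using hC)]
        exact le_top
      refine iSup₂_le fun t ht => ?_
      have ht0 : (0:ℝ) < t := ht.1
      have hoft0 : ENNReal.ofReal t ≠ 0 := by
        simpa [ENNReal.ofReal_eq_zero, not_le] using ht0
      have hofttop : ENNReal.ofReal t ≠ ⊤ := ENNReal.ofReal_ne_top
      have hfs : ∀ s ∈ Ioo (0:ℝ) t, f s ≤ M * (1 / φ s) := by
        intro s hs
        have hsd := dom_of_mem_Ioo ht hs
        have h1 : φ s * f s ≤ M := le_iSup₂_of_le s hsd le_rfl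
        rw [one_div, ← div_eq_mul_inv]
        rw [ENNReal.le_div_iff_mul_le (Or.inl (hφfin s hsd).1.ne')
          (Or.inl (hφfin s hsd).2.ne), mul_comm]
        exact h1
      have hIle : (∫⁻ s in Ioo (0:ℝ) t, f s) ≤
          M * (ENNReal.ofReal C * (ENNReal.ofReal t / φ t)) := by
        calc (∫⁻ s in Ioo (0:ℝ) t, f s)
            ≤ ∫⁻ s in Ioo (0:ℝ) t, M * (1 / φ s) :=
              setLIntegral_mono' measurableSet_Ioo hfs
          _ = M * ∫⁻ s in Ioo (0:ℝ) t, 1 / φ s := lintegral_const_mul' _ _ hMtop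
          _ ≤ M * (ENNReal.ofReal C * (ENNReal.ofReal t / φ t)) :=
              mul_le_mul_right (hB t ht) _
      have hdle : dstar f t ≤ M * ENNReal.ofReal C * (φ t)⁻¹ := by
        rw [dstar]
        rw [ENNReal.div_le_iff hoft0 hofttop]
        calc (∫⁻ s in Ioo (0:ℝ) t, f s)
            ≤ M * (ENNReal.ofReal C * (ENNReal.ofReal t / φ t)) := hIle
          _ = M * ENNReal.ofReal C * (φ t)⁻¹ * ENNReal.ofReal t := by
              rw [div_eq_mul_inv]; ring
      calc φ t * dstar f t ≤ φ t * (M * ENNReal.ofReal C * (φ t)⁻¹) :=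
            mul_le_mul_right hdle _
        _ = (φ t * (φ t)⁻¹) * (M * ENNReal.ofReal C) := by ring
        _ = M * ENNReal.ofReal C := by
            rw [ENNReal.mul_inv_cancel (hφfin t ht).1.ne' (hφfin t ht).2.ne, one_mul]
        _ = ENNReal.ofReal C * M := mul_comm _ _
  · intro f hf
    refine iSup₂_le fun t ht => ?_
    have ht0 : (0:ℝ) < t := ht.1
    have hoft0 : ENNReal.ofReal t ≠ 0 := by
      simpa [ENNReal.ofReal_eq_zero, not_le] using ht0
    have hofttop : ENNReal.ofReal t ≠ ⊤ := ENNReal.ofReal_ne_top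
    have hIge : f t * ENNReal.ofReal t ≤ ∫⁻ s in Ioo (0:ℝ) t, f s := by
      have := setLIntegral_mono' (μ := volume) (f := fun _ => f t) (g := f) measurableSet_Ioo
        (fun s hs => hf.2 s t (dom_of_mem_Ioo ht hs) hs.2.le ht)
      calc f t * ENNReal.ofReal t = ∫⁻ _ in Ioo (0:ℝ) t, f t := by
            rw [setLIntegral_const, Real.volume_Ioo, sub_zero]
        _ ≤ ∫⁻ s in Ioo (0:ℝ) t, f s := this
    have hfd : f t ≤ dstar f t := by
      rw [dstar, ENNReal.le_div_iff_mul_le (Or.inl hoft0) (Or.inl hofttop)]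
      exact hIge
    exact le_iSup₂_of_le t ht (mul_le_mul_right hfd _)
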